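/- Best-response dynamics converges in finitely many steps: if α⁰, α¹, …, α^T is a sequence of strategy profiles such that for each t there is a user k_t with α^{t+1} agreeing with α^t at every coordinate other than k_t and c k_t α^{t+1} < c k_t α^t, then T + 1 ≤ (M + 1) ^ K; in particular there is no infinite such improvement sequence. -/

import Mathlib

/-- Best-response (improvement) dynamics converges in finitely many
steps: any strict improvement sequence of strategy profiles has length at most
`(M + 1) ^ K`. -/
theorem improvement_dynamics_finite
    (K M : ℕ) (B σ2 τ ζ : ℝ)
    (hB : 0 < B) (hσ : 0 < σ2) (hτ : 0 < τ) (hζ : 0 < ζ)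
    (p h I D S : Fin K → ℝ)
    (hp : ∀ k, 0 < p k) (hh : ∀ k, 0 < h k) (hI : ∀ k, 0 < I k)
    (hD : ∀ k, 0 < D k) (hS : ∀ k, 0 < S k)
    (b : Fin K → ℝ) (hb : ∀ k, b k = 0 ∨ b k = 1)
    (w : Fin K → ℝ) (hw : ∀ k, w k = p k * h k)
    (Υ : Fin K → (Fin K → Fin (M + 1)) → ℝ)
    (hΥ : ∀ k α, Υ k α =
      ∑ n ∈ (Finset.univ.erase k).filter (fun n => α n = α k), w n)
    (r : Fin K → (Fin K → Fin (M + 1)) → ℝ)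
    (hr : ∀ k α, r k α = (B / (M : ℝ)) * Real.logb 2 (1 + w k / (Υ k α + σ2)))
    (EL : Fin K → ℝ) (hEL : ∀ k, EL k = ζ * S k ^ 3 / τ ^ 2)
    (EO : Fin K → (Fin K → Fin (M + 1)) → ℝ)
    (hEO : ∀ k α, EO k α = p k * (I k + (1 - b k) * D k) / r k α)
    (c : Fin K → (Fin K → Fin (M + 1)) → ℝ)
    (hc : ∀ k α, c k α = if α k = 0 then EL k else EO k α)
    (V : Fin K → ℝ)
    (hV : ∀ k, V k = w k /
        ((2 : ℝ) ^ (p k * τ ^ 2 * (M : ℝ) * (I k + (1 - b k) * D k) / (B * ζ * S k ^ 3)) - 1)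
      - σ2)
    (φ : (Fin K → Fin (M + 1)) → ℝ)
    (hφ : ∀ α, φ α =
      (1 / 2) * ∑ k : Fin K, ∑ n ∈ Finset.univ.erase k,
          w k * w n * (if α n = α k then (1 : ℝ) else 0) * (if 0 < α k then (1 : ℝ) else 0)
      + ∑ k : Fin K, w k * V k * (if α k = 0 then (1 : ℝ) else 0))
    (α : ℕ → Fin K → Fin (M + 1)) (T : ℕ)
    (himp : ∀ t, t < T → ∃ kt : Fin K,
      (∀ n, n ≠ kt → α (t + 1) n = α t n) ∧ c kt (α (t + 1)) < c kt (α t)) :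
    T + 1 ≤ (M + 1) ^ K := by
  classical
  -- positivity of weights
  have hwpos : ∀ n, 0 < w n := fun n => by rw [hw]; exact mul_pos (hp n) (hh n)
  -- key step: potential strictly decreases
  have key : ∀ t, t < T → φ (α (t + 1)) < φ (α t) := by
    intro t ht
    obtain ⟨k, hag, hlt⟩ := himp t ht
    set a : Fin K → Fin (M + 1) := α t with ha
    set a' : Fin K → Fin (M + 1) := α (t + 1) with ha'
    have hwk : 0 < w k := hwpos k
    have hbk : 0 ≤ 1 - b k := by rcases hb k with h0 | h0 <;> simp [h0]
    have hCk : 0 < I k + (1 - b k) * D k :=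
      add_pos_of_pos_of_nonneg (hI k) (mul_nonneg hbk (hD k).le)
    have hC : 0 < p k * (I k + (1 - b k) * D k) := mul_pos (hp k) hCk
    -- the two profiles differ at k
    have hne : a' k ≠ a k := by
      intro heq
      have : a' = a := funext fun n => by
        by_cases hn : n = k
        · subst hn; exact heq
        · exact hag n hn
      rw [this] at hlt; exact lt_irrefl _ hlt
    have hM : 0 < M := by
      rcases Nat.eq_zero_or_pos M with h0 | h0
      · exfalso; subst h0
        have h1 := (a' k).isLt
        have h2 := (a k).isLt
        exact hne (Fin.ext (by omega))
      · exact h0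
    have hMR : (0 : ℝ) < (M : ℝ) := by exact_mod_cast hM
    have hBM : 0 < B / (M : ℝ) := div_pos hB hMR
    -- cost as a strictly monotone function of effective interference
    set g : ℝ → ℝ := fun u =>
      p k * (I k + (1 - b k) * D k) / ((B / (M : ℝ)) * Real.logb 2 (1 + w k / (u + σ2)))
      with hgdef
    have hg : ∀ u v : ℝ, -σ2 < u → u < v → g u < g v := by
      intro u v hu huv
      have hu' : (0 : ℝ) < u + σ2 := by linarith
      have hv' : (0 : ℝ) < v + σ2 := by linarith
      have h1 : w k / (v + σ2) < w k / (u + σ2) :=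
        div_lt_div_of_pos_left hwk hu' (by linarith)
      have h2 : 0 < w k / (v + σ2) := div_pos hwk hv'
      have h3 : Real.logb 2 (1 + w k / (v + σ2)) < Real.logb 2 (1 + w k / (u + σ2)) :=
        Real.logb_lt_logb one_lt_two (by linarith) (by linarith)
      have h4 : 0 < Real.logb 2 (1 + w k / (v + σ2)) :=
        Real.logb_pos one_lt_two (by linarith)
      have h5 : (B / (M : ℝ)) * Real.logb 2 (1 + w k / (v + σ2)) <
          (B / (M : ℝ)) * Real.logb 2 (1 + w k / (u + σ2)) :=
        mul_lt_mul_of_pos_left h3 hBM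
      have h6 : 0 < (B / (M : ℝ)) * Real.logb 2 (1 + w k / (v + σ2)) := mul_pos hBM h4
      exact div_lt_div_of_pos_left hC h6 h5
    have hΥnn : ∀ β : Fin K → Fin (M + 1), 0 ≤ Υ k β := fun β => by
      rw [hΥ]; exact Finset.sum_nonneg fun n _ => (hwpos n).le
    -- the threshold value
    set A : ℝ := p k * τ ^ 2 * (M : ℝ) * (I k + (1 - b k) * D k) / (B * ζ * S k ^ 3) with hAdef
    have hA : 0 < A := by
      rw [hAdef]
      exact div_pos (mul_pos (mul_pos (mul_pos (hp k) (pow_pos hτ 2)) hMR) hCk)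
        (mul_pos (mul_pos hB hζ) (pow_pos (hS k) 3))
    have h2A : (1 : ℝ) < (2 : ℝ) ^ A := by
      have := (Real.rpow_lt_rpow_left_iff (x := 2) (y := 0) (z := A) one_lt_two).mpr hA
      rwa [Real.rpow_zero] at this
    have h2A' : (0 : ℝ) < (2 : ℝ) ^ A - 1 := by linarith
    have hVσ2 : V k + σ2 = w k / ((2 : ℝ) ^ A - 1) := by rw [hV]; ring
    have hVσ : -σ2 < V k := by
      have : 0 < V k + σ2 := by rw [hVσ2]; exact div_pos hwk h2A'
      linarith
    -- cost equals g of the effective interference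
    have hcg : ∀ β : Fin K → Fin (M + 1),
        c k β = g (if β k = 0 then V k else Υ k β) := by
      intro β
      rw [hc]
      by_cases h0 : β k = 0
      · rw [if_pos h0, if_pos h0, hEL, hgdef]
        simp only
        rw [hVσ2]
        have hwk' : w k ≠ 0 := ne_of_gt hwk
        have : w k / (w k / ((2 : ℝ) ^ A - 1)) = (2 : ℝ) ^ A - 1 := by
          rw [div_div_eq_mul_div, mul_comm, mul_div_assoc, div_self hwk', mul_one]
        rw [this]
        have : (1 : ℝ) + ((2 : ℝ) ^ A - 1) = (2 : ℝ) ^ A := by ring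
        rw [this, Real.logb_rpow (by norm_num) (by norm_num)]
        have hB' : B ≠ 0 := hB.ne'
        have hM' : (M : ℝ) ≠ 0 := hMR.ne'
        have hζ' : ζ ≠ 0 := hζ.ne'
        have hτ' : τ ≠ 0 := hτ.ne'
        have hS3 : S k ^ 3 ≠ 0 := (pow_pos (hS k) 3).ne'
        have hBMA : (B / (M : ℝ)) * A
            = p k * (I k + (1 - b k) * D k) * τ ^ 2 / (ζ * S k ^ 3) := by
          rw [hAdef]; field_simp
        rw [hBMA, div_div_eq_mul_div]
        rw [show p k * (I k + (1 - b k) * D k) * (ζ * S k ^ 3)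
              / (p k * (I k + (1 - b k) * D k) * τ ^ 2)
            = ζ * S k ^ 3 / τ ^ 2 from mul_div_mul_left _ _ hC.ne']
      · rw [if_neg h0, if_neg h0, hEO, hr, hgdef]
    have hXlt : (if a' k = 0 then V k else Υ k a') < (if a k = 0 then V k else Υ k a) := by
      have hdom : ∀ β : Fin K → Fin (M + 1), -σ2 < (if β k = 0 then V k else Υ k β) := by
        intro β
        by_cases h0 : β k = 0
        · rw [if_pos h0]; exact hVσ
        · rw [if_neg h0]; have := hΥnn β; linarith
      rw [hcg a, hcg a'] at hlt
      by_contra hle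
      push_neg at hle
      rcases eq_or_lt_of_le hle with heq | hlt'
      · rw [heq] at hlt; exact lt_irrefl _ hlt
      · exact absurd (hg _ _ (hdom a) hlt') (not_lt.mpr hlt.le)
    -- decomposition of the potential
    have hdecomp : ∀ β : Fin K → Fin (M + 1),
        φ β = w k * (if β k = 0 then V k else Υ k β)
          + ((1 / 2) * ∑ k' ∈ Finset.univ.erase k, ∑ n ∈ (Finset.univ.erase k').erase k,
              w k' * w n * (if β n = β k' then (1 : ℝ) else 0) * (if 0 < β k' then (1 : ℝ) else 0)
            + ∑ k' ∈ Finset.univ.erase k, w k' * V k' * (if β k' = 0 then (1 : ℝ) else 0)) := by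
      intro β
      rw [hφ β]
      -- the diagonal-row sum
      have hGk : ∑ n ∈ Finset.univ.erase k,
          w k * w n * (if β n = β k then (1 : ℝ) else 0) * (if 0 < β k then (1 : ℝ) else 0)
          = (if β k = 0 then 0 else w k * Υ k β) := by
        by_cases h0 : β k = 0
        · rw [if_pos h0]
          apply Finset.sum_eq_zero
          intro n _
          have : ¬ (0 < β k) := by rw [h0]; exact lt_irrefl _
          rw [if_neg this]; ring
        · rw [if_neg h0, hΥ, Finset.sum_filter, Finset.mul_sum]
          apply Finset.sum_congr rfl
          intro n _
          have hpos : 0 < β k := Fin.pos_iff_ne_zero.mpr h0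
          rw [if_pos hpos]
          by_cases hnk : β n = β k
          · rw [if_pos hnk, if_pos hnk]; ring
          · rw [if_neg hnk, if_neg hnk]; ring
      -- the column-k terms equal the row-k terms
      have hcol : ∀ k' ∈ Finset.univ.erase k,
          w k' * w k * (if β k = β k' then (1 : ℝ) else 0) * (if 0 < β k' then (1 : ℝ) else 0)
          = w k * w k' * (if β k' = β k then (1 : ℝ) else 0) * (if 0 < β k then (1 : ℝ) else 0) := by
        intro k' _
        by_cases hkk : β k' = β k
        · rw [if_pos hkk, if_pos hkk.symm, hkk]; ring
        · rw [if_neg hkk, if_neg (fun hh' => hkk hh'.symm)]; ring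
      have hsplit : ∑ k'' : Fin K, ∑ n ∈ Finset.univ.erase k'',
          w k'' * w n * (if β n = β k'' then (1 : ℝ) else 0) * (if 0 < β k'' then (1 : ℝ) else 0)
          = (if β k = 0 then 0 else w k * Υ k β)
            + (if β k = 0 then 0 else w k * Υ k β)
            + ∑ k' ∈ Finset.univ.erase k, ∑ n ∈ (Finset.univ.erase k').erase k,
              w k' * w n * (if β n = β k' then (1 : ℝ) else 0) * (if 0 < β k' then (1 : ℝ) else 0) := by
        rw [← Finset.add_sum_erase _ _ (Finset.mem_univ k)]
        have hinner : ∀ k' ∈ Finset.univ.erase k,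
            ∑ n ∈ Finset.univ.erase k',
              w k' * w n * (if β n = β k' then (1 : ℝ) else 0) * (if 0 < β k' then (1 : ℝ) else 0)
            = w k' * w k * (if β k = β k' then (1 : ℝ) else 0) * (if 0 < β k' then (1 : ℝ) else 0)
              + ∑ n ∈ (Finset.univ.erase k').erase k,
              w k' * w n * (if β n = β k' then (1 : ℝ) else 0) * (if 0 < β k' then (1 : ℝ) else 0) := by
          intro k' hk'
          have hkmem : k ∈ Finset.univ.erase k' := by
            rw [Finset.mem_erase]
            exact ⟨fun hkk => (Finset.mem_erase.mp hk').1 hkk.symm, Finset.mem_univ k⟩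
          rw [← Finset.add_sum_erase _ _ hkmem]
        rw [Finset.sum_congr rfl hinner, Finset.sum_add_distrib, hGk]
        have : ∑ k' ∈ Finset.univ.erase k,
            w k' * w k * (if β k = β k' then (1 : ℝ) else 0) * (if 0 < β k' then (1 : ℝ) else 0)
            = (if β k = 0 then 0 else w k * Υ k β) := by
          rw [Finset.sum_congr rfl hcol, ← hGk]
        rw [this]; ring
      rw [hsplit, ← Finset.add_sum_erase _ (fun k'' => w k'' * V k'' * (if β k'' = 0 then (1 : ℝ) else 0)) (Finset.mem_univ k)]
      by_cases h0 : β k = 0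
      · rw [if_pos h0, if_pos h0, if_pos h0]; ring
      · rw [if_neg h0, if_neg h0, if_neg h0]; ring
    -- the remainder terms agree for a and a'
    have hR1 : ∑ k' ∈ Finset.univ.erase k, ∑ n ∈ (Finset.univ.erase k').erase k,
          w k' * w n * (if a' n = a' k' then (1 : ℝ) else 0) * (if 0 < a' k' then (1 : ℝ) else 0)
        = ∑ k' ∈ Finset.univ.erase k, ∑ n ∈ (Finset.univ.erase k').erase k,
          w k' * w n * (if a n = a k' then (1 : ℝ) else 0) * (if 0 < a k' then (1 : ℝ) else 0) := by
      apply Finset.sum_congr rfl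
      intro k' hk'
      have hk'k : k' ≠ k := (Finset.mem_erase.mp hk').1
      apply Finset.sum_congr rfl
      intro n hn
      have hnk : n ≠ k := (Finset.mem_erase.mp hn).1
      rw [hag k' hk'k, hag n hnk]
    have hR2 : ∑ k' ∈ Finset.univ.erase k, w k' * V k' * (if a' k' = 0 then (1 : ℝ) else 0)
        = ∑ k' ∈ Finset.univ.erase k, w k' * V k' * (if a k' = 0 then (1 : ℝ) else 0) := by
      apply Finset.sum_congr rfl
      intro k' hk'
      rw [hag k' (Finset.mem_erase.mp hk').1]
    rw [hdecomp a, hdecomp a', hR1, hR2]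
    have := mul_lt_mul_of_pos_left hXlt hwk
    linarith
  -- strict decrease along the whole sequence
  have chain : ∀ t, t ≤ T → ∀ s, s < t → φ (α t) < φ (α s) := by
    intro t
    induction t with
    | zero => intro _ s hs; omega
    | succ t ih =>
      intro ht s hs
      have h1 : φ (α (t + 1)) < φ (α t) := key t (by omega)
      rcases Nat.lt_succ_iff_lt_or_eq.mp hs with hlt | heq
      · exact h1.trans (ih (by omega) s hlt)
      · subst heq; exact h1
  -- injectivity and counting
  have hinj : Function.Injective (fun i : Fin (T + 1) => α i.val) := by
    intro i j hij
    have hij' : α i.val = α j.val := hij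
    by_contra hne
    rcases lt_trichotomy i j with hlt | heq | hlt
    · have := chain j.val (by omega) i.val hlt
      rw [hij'] at this; exact lt_irrefl _ this
    · exact hne heq
    · have := chain i.val (by omega) j.val hlt
      rw [hij'] at this; exact lt_irrefl _ this
  calc T + 1 = Fintype.card (Fin (T + 1)) := (Fintype.card_fin _).symm
    _ ≤ Fintype.card (Fin K → Fin (M + 1)) := Fintype.card_le_of_injective _ hinj
    _ = (M + 1) ^ K := by rw [Fintype.card_fun, Fintype.card_fin, Fintype.card_fin]
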